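/- (GAIL value gap with JS divergence) If an expert policy $\pi_E$ and an imitated policy $\pi_I$ on a finite MDP with reward bounded by $R_{\max}$ satisfy $D_{JS}(\rho_{\pi_I}, \rho_{\pi_E}) \le \epsilon$, then $V_{\pi_E} - V_{\pi_I} \le \frac{2\sqrt{2} R_{\max}}{1-\gamma}\sqrt{\epsilon}$. -/

import Mathlib

open BigOperators



lemma myL1 (t : ℝ) (h0 : 0 ≤ t) (h1 : t < 1) :
    2 * t ≤ Real.log (1 + t) - Real.log (1 - t) := by
  set f : ℝ → ℝ := fun x => Real.log (1 + x) - Real.log (1 - x) - 2 * x with hf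
  have hd : ∀ x ∈ Set.Ico (0:ℝ) 1, HasDerivAt f (1/(1+x) + 1/(1-x) - 2) x := by
    intro x hx
    have h1p : (0:ℝ) < 1 + x := by linarith [hx.1]
    have h1m : (0:ℝ) < 1 - x := by linarith [hx.2]
    have d1 : HasDerivAt (fun x : ℝ => Real.log (1 + x)) (1/(1+x)) x := by
      have hi : HasDerivAt (fun x : ℝ => 1 + x) 1 x := (hasDerivAt_id x).const_add 1
      simpa [Function.comp_def] using (Real.hasDerivAt_log h1p.ne').comp x hi
    have d2 : HasDerivAt (fun x : ℝ => Real.log (1 - x)) (-(1/(1-x))) x := by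
      have hi : HasDerivAt (fun x : ℝ => 1 - x) (-1) x := (hasDerivAt_id x).const_sub 1
      have := (Real.hasDerivAt_log h1m.ne').comp x hi
      simpa [Function.comp_def] using this
    have d3 : HasDerivAt (fun x : ℝ => 2 * x) 2 x := by
      simpa using (hasDerivAt_id x).const_mul 2
    have := (d1.sub d2).sub d3
    simpa [hf, Pi.sub_def] using this.congr_deriv (by ring)
  have hmono : MonotoneOn f (Set.Ico (0:ℝ) 1) := by
    apply monotoneOn_of_deriv_nonneg (convex_Ico 0 1)
    · intro x hx; exact (hd x hx).continuousAt.continuousWithinAt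
    · intro x hx
      rw [interior_Ico] at hx
      exact (hd x ⟨le_of_lt hx.1, hx.2⟩).differentiableAt.differentiableWithinAt
    · intro x hx
      rw [interior_Ico] at hx
      rw [(hd x ⟨le_of_lt hx.1, hx.2⟩).deriv]
      have h1p : (0:ℝ) < 1 + x := by linarith [hx.1]
      have h1m : (0:ℝ) < 1 - x := by linarith [hx.2]
      rw [sub_nonneg, div_add_div _ _ h1p.ne' h1m.ne', le_div_iff₀ (mul_pos h1p h1m)]
      nlinarith [sq_nonneg x]
  have h00 : f 0 = 0 := by simp [hf]
  have := hmono (Set.mem_Ico.2 ⟨le_refl 0, one_pos⟩) (Set.mem_Ico.2 ⟨h0, h1⟩) h0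
  rw [h00, hf] at this
  simp only at this
  linarith

lemma myL2 (t : ℝ) (h0 : 0 ≤ t) (h1 : t ≤ 1) :
    t ^ 2 ≤ (1 + t) * Real.log (1 + t) + (1 - t) * Real.log (1 - t) := by
  rcases eq_or_lt_of_le h1 with rfl | h1
  · norm_num
    nlinarith [Real.log_two_gt_d9]
  set g : ℝ → ℝ := fun x => (1 + x) * Real.log (1 + x) + (1 - x) * Real.log (1 - x) - x ^ 2
    with hg
  have hd : ∀ x ∈ Set.Ico (0:ℝ) 1,
      HasDerivAt g (Real.log (1 + x) - Real.log (1 - x) - 2 * x) x := by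
    intro x hx
    have h1p : (0:ℝ) < 1 + x := by linarith [hx.1]
    have h1m : (0:ℝ) < 1 - x := by linarith [hx.2]
    have i1 : HasDerivAt (fun x : ℝ => 1 + x) 1 x := (hasDerivAt_id x).const_add 1
    have i2 : HasDerivAt (fun x : ℝ => 1 - x) (-1) x := (hasDerivAt_id x).const_sub 1
    have l1 : HasDerivAt (fun x : ℝ => Real.log (1 + x)) (1/(1+x)) x := by
      simpa [Function.comp_def] using (Real.hasDerivAt_log h1p.ne').comp x i1
    have l2 : HasDerivAt (fun x : ℝ => Real.log (1 - x)) (-(1/(1-x))) x := by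
      simpa [Function.comp_def] using (Real.hasDerivAt_log h1m.ne').comp x i2
    have d1 : HasDerivAt (fun x : ℝ => (1 + x) * Real.log (1 + x))
        (1 * Real.log (1 + x) + (1 + x) * (1/(1+x))) x := i1.mul l1
    have d2 : HasDerivAt (fun x : ℝ => (1 - x) * Real.log (1 - x))
        ((-1) * Real.log (1 - x) + (1 - x) * (-(1/(1-x)))) x := i2.mul l2
    have d3 : HasDerivAt (fun x : ℝ => x ^ 2) (2 * x) x := by
      simpa using hasDerivAt_pow 2 x
    have := (d1.add d2).sub d3
    apply this.congr_deriv
    field_simp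
    ring
  have hmono : MonotoneOn g (Set.Ico (0:ℝ) 1) := by
    apply monotoneOn_of_deriv_nonneg (convex_Ico 0 1)
    · intro x hx; exact (hd x hx).continuousAt.continuousWithinAt
    · intro x hx
      rw [interior_Ico] at hx
      exact (hd x ⟨le_of_lt hx.1, hx.2⟩).differentiableAt.differentiableWithinAt
    · intro x hx
      rw [interior_Ico] at hx
      rw [(hd x ⟨le_of_lt hx.1, hx.2⟩).deriv, sub_nonneg]
      exact myL1 x (le_of_lt hx.1) hx.2
  have h00 : g 0 = 0 := by simp [hg]
  have := hmono (Set.mem_Ico.2 ⟨le_refl 0, one_pos⟩) (Set.mem_Ico.2 ⟨h0, h1⟩) h0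
  rw [h00, hg] at this
  simp only at this
  linarith

lemma myKeyAux (p q : ℝ) (hq : 0 ≤ q) (hpq : q ≤ p) (hs : 0 < p + q) :
    (p - q)^2/(2*(p+q)) ≤ p * Real.log (p/((p+q)/2)) + q * Real.log (q/((p+q)/2)) := by
  set t := (p - q)/(p + q) with ht
  have ht0 : 0 ≤ t := div_nonneg (by linarith) hs.le
  have ht1 : t ≤ 1 := by rw [ht, div_le_one hs]; linarith
  have e1 : p/((p+q)/2) = 1 + t := by rw [ht]; field_simp; ring
  have e2 : q/((p+q)/2) = 1 - t := by rw [ht]; field_simp; ring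
  have ep : p = (p+q)/2 * (1+t) := by rw [ht]; field_simp; ring
  have eq' : q = (p+q)/2 * (1-t) := by rw [ht]; field_simp; ring
  have eL : (p-q)^2/(2*(p+q)) = (p+q)/2 * t^2 := by rw [ht]; field_simp
  rw [e1, e2, eL]
  have h2 := mul_le_mul_of_nonneg_left (myL2 t ht0 ht1)
    (show (0:ℝ) ≤ (p+q)/2 by positivity)
  calc (p+q)/2 * t^2
      ≤ (p+q)/2 * ((1+t)*Real.log (1+t) + (1-t)*Real.log (1-t)) := h2
    _ = p * Real.log (1+t) + q * Real.log (1-t) := by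
        linear_combination (Real.log (1+t)) * ep.symm + (Real.log (1-t)) * eq'.symm

lemma myKey (p q : ℝ) (hp : 0 ≤ p) (hq : 0 ≤ q) :
    (p - q)^2/(2*(p+q)) ≤ p * Real.log (p/((p+q)/2)) + q * Real.log (q/((p+q)/2)) := by
  rcases eq_or_lt_of_le (show (0:ℝ) ≤ p + q by positivity) with h | h
  · have hp0 : p = 0 := by linarith
    have hq0 : q = 0 := by linarith
    simp [hp0, hq0]
  · rcases le_total q p with hle | hle
    · exact myKeyAux p q hq hle h
    · have h2 := myKeyAux q p hp hle (by linarith)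
      calc (p-q)^2/(2*(p+q)) = (q-p)^2/(2*(q+p)) := by ring_nf
        _ ≤ q * Real.log (q/((q+p)/2)) + p * Real.log (p/((q+p)/2)) := h2
        _ = p * Real.log (p/((p+q)/2)) + q * Real.log (q/((p+q)/2)) := by
            rw [add_comm q p]; ring

/-- GAIL value gap with JS divergence: if `D_JS(ρ_πI, ρ_πE) ≤ ε` then
`V_πE - V_πI ≤ 2√2 R_max/(1-γ) √ε`. -/
theorem gail_value_gap_js
    {S A : Type*} [Fintype S] [Fintype A]
    (γ Rmax ε : ℝ) (hγ0 : 0 ≤ γ) (hγ1 : γ < 1) (hε : 0 ≤ ε)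
    (r : S → A → ℝ) (hr : ∀ s a, |r s a| ≤ Rmax)
    (ρI ρE : S → A → ℝ)
    (hρI0 : ∀ s a, 0 ≤ ρI s a) (hρI1 : ∑ s, ∑ a, ρI s a = 1)
    (hρE0 : ∀ s a, 0 ≤ ρE s a) (hρE1 : ∑ s, ∑ a, ρE s a = 1)
    (VI VE : ℝ)
    (hVI : VI = (1 / (1 - γ)) * ∑ s, ∑ a, ρI s a * r s a)
    (hVE : VE = (1 / (1 - γ)) * ∑ s, ∑ a, ρE s a * r s a)
    (hJS : (1 / 2) * ((∑ s, ∑ a, ρI s a * Real.log (ρI s a / ((ρI s a + ρE s a) / 2)))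
        + ∑ s, ∑ a, ρE s a * Real.log (ρE s a / ((ρI s a + ρE s a) / 2))) ≤ ε) :
    VE - VI ≤ (2 * Real.sqrt 2 * Rmax / (1 - γ)) * Real.sqrt ε := by
  have hγ : (0:ℝ) < 1 - γ := by linarith
  -- work over the product type
  set P : S × A → ℝ := fun x => ρI x.1 x.2 with hP
  set Q : S × A → ℝ := fun x => ρE x.1 x.2 with hQ
  have hP0 : ∀ x, 0 ≤ P x := fun x => hρI0 x.1 x.2
  have hQ0 : ∀ x, 0 ≤ Q x := fun x => hρE0 x.1 x.2
  have hP1 : ∑ x : S × A, P x = 1 := by rw [Fintype.sum_prod_type]; exact hρI1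
  have hQ1 : ∑ x : S × A, Q x = 1 := by rw [Fintype.sum_prod_type]; exact hρE1
  -- Rmax is nonnegative
  have hne : Nonempty (S × A) := by
    by_contra h
    rw [not_nonempty_iff] at h
    have : ∑ x : S × A, P x = 0 := by
      rw [Finset.univ_eq_empty, Finset.sum_empty]
    rw [hP1] at this; norm_num at this
  obtain ⟨⟨s0, a0⟩⟩ := hne
  have hR : 0 ≤ Rmax := le_trans (abs_nonneg _) (hr s0 a0)
  -- JS sum over product type
  set H : S × A → ℝ := fun x =>
    P x * Real.log (P x / ((P x + Q x) / 2)) + Q x * Real.log (Q x / ((P x + Q x) / 2))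
    with hH
  have hHsum : ∑ x : S × A, H x ≤ 2 * ε := by
    have e : ∑ x : S × A, H x =
        (∑ s, ∑ a, ρI s a * Real.log (ρI s a / ((ρI s a + ρE s a) / 2)))
        + ∑ s, ∑ a, ρE s a * Real.log (ρE s a / ((ρI s a + ρE s a) / 2)) := by
      simp only [hH, hP, hQ, Fintype.sum_prod_type, ← Finset.sum_add_distrib]
    rw [e]; linarith
  have hHkey : ∀ x : S × A, (P x - Q x)^2 / (2 * (P x + Q x)) ≤ H x :=
    fun x => myKey (P x) (Q x) (hP0 x) (hQ0 x)
  have hHnn : ∀ x : S × A, 0 ≤ H x := by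
    intro x
    refine le_trans ?_ (hHkey x)
    have h1 := hP0 x
    have h2 := hQ0 x
    positivity
  -- total variation bound via Cauchy-Schwarz
  set T : ℝ := ∑ x : S × A, |Q x - P x| with hT
  have hT0 : 0 ≤ T := Finset.sum_nonneg fun x _ => abs_nonneg _
  have hCS : T ^ 2 ≤ 8 * ε := by
    have key : T = ∑ x : S × A,
        Real.sqrt (P x + Q x) * (|Q x - P x| / Real.sqrt (P x + Q x)) := by
      apply Finset.sum_congr rfl
      intro x _
      rcases eq_or_lt_of_le (add_nonneg (hP0 x) (hQ0 x)) with h | h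
      · have hp : P x = 0 := by have := hP0 x; have := hQ0 x; linarith
        have hq : Q x = 0 := by have := hP0 x; have := hQ0 x; linarith
        simp [hp, hq]
      · rw [mul_comm, div_mul_cancel₀ _ (Real.sqrt_ne_zero'.mpr h)]
    have cs := Finset.sum_mul_sq_le_sq_mul_sq Finset.univ
      (fun x : S × A => Real.sqrt (P x + Q x))
      (fun x : S × A => |Q x - P x| / Real.sqrt (P x + Q x))
    rw [← key] at cs
    have e1 : ∑ x : S × A, (Real.sqrt (P x + Q x)) ^ 2 = 2 := by
      have : ∀ x : S × A, (Real.sqrt (P x + Q x)) ^ 2 = P x + Q x := by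
        intro x; exact Real.sq_sqrt (add_nonneg (hP0 x) (hQ0 x))
      rw [Finset.sum_congr rfl fun x _ => this x, Finset.sum_add_distrib, hP1, hQ1]
      norm_num
    have e2 : ∑ x : S × A, (|Q x - P x| / Real.sqrt (P x + Q x)) ^ 2 ≤ 2 * (2 * ε) := by
      have step : ∀ x : S × A,
          (|Q x - P x| / Real.sqrt (P x + Q x)) ^ 2 ≤ 2 * H x := by
        intro x
        have : (|Q x - P x| / Real.sqrt (P x + Q x)) ^ 2
            = (P x - Q x)^2 / (P x + Q x) := by
          rw [div_pow, sq_abs, Real.sq_sqrt (add_nonneg (hP0 x) (hQ0 x))]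
          rw [show (Q x - P x)^2 = (P x - Q x)^2 by ring]
        rw [this]
        have h2 : (P x - Q x)^2 / (P x + Q x)
            = 2 * ((P x - Q x)^2 / (2 * (P x + Q x))) := by
          rw [mul_div_assoc']
          rw [mul_div_mul_left _ _ (two_ne_zero)]
        rw [h2]
        linarith [hHkey x]
      calc ∑ x : S × A, (|Q x - P x| / Real.sqrt (P x + Q x)) ^ 2
          ≤ ∑ x : S × A, 2 * H x := Finset.sum_le_sum fun x _ => step x
        _ = 2 * ∑ x : S × A, H x := by rw [Finset.mul_sum]
        _ ≤ 2 * (2 * ε) := by linarith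
    calc T ^ 2 ≤ (∑ x : S × A, (Real.sqrt (P x + Q x)) ^ 2) *
          ∑ x : S × A, (|Q x - P x| / Real.sqrt (P x + Q x)) ^ 2 := cs
      _ ≤ 2 * (2 * (2 * ε)) := by
          rw [e1]
          have := e2
          nlinarith
      _ = 8 * ε := by ring
  have hTle : T ≤ 2 * Real.sqrt 2 * Real.sqrt ε := by
    have h8 : Real.sqrt (8 * ε) = 2 * Real.sqrt 2 * Real.sqrt ε := by
      rw [Real.sqrt_mul (by norm_num : (0:ℝ) ≤ 8) ε]
      have : Real.sqrt 8 = 2 * Real.sqrt 2 := by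
        rw [show (8:ℝ) = 2^2 * 2 by norm_num, Real.sqrt_mul (by positivity),
          Real.sqrt_sq (by norm_num : (0:ℝ) ≤ 2)]
      rw [this]
    rw [← h8]
    exact (Real.le_sqrt hT0 (by positivity)).2 hCS
  -- value gap in terms of T
  have hgap : VE - VI ≤ (1 / (1 - γ)) * (T * Rmax) := by
    have e : VE - VI = (1 / (1 - γ)) * ∑ x : S × A, (Q x - P x) * r x.1 x.2 := by
      rw [hVE, hVI, ← mul_sub]
      congr 1
      rw [Fintype.sum_prod_type, ← Finset.sum_sub_distrib]
      apply Finset.sum_congr rfl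
      intro s _
      rw [← Finset.sum_sub_distrib]
      apply Finset.sum_congr rfl
      intro a _
      ring
    rw [e]
    apply mul_le_mul_of_nonneg_left _ (by positivity)
    calc ∑ x : S × A, (Q x - P x) * r x.1 x.2
        ≤ ∑ x : S × A, |Q x - P x| * Rmax := by
          apply Finset.sum_le_sum
          intro x _
          calc (Q x - P x) * r x.1 x.2 ≤ |(Q x - P x) * r x.1 x.2| := le_abs_self _
            _ = |Q x - P x| * |r x.1 x.2| := abs_mul _ _
            _ ≤ |Q x - P x| * Rmax :=
                mul_le_mul_of_nonneg_left (hr x.1 x.2) (abs_nonneg _)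
      _ = T * Rmax := by rw [hT, Finset.sum_mul]
  calc VE - VI ≤ (1 / (1 - γ)) * (T * Rmax) := hgap
    _ ≤ (1 / (1 - γ)) * ((2 * Real.sqrt 2 * Real.sqrt ε) * Rmax) := by
        apply mul_le_mul_of_nonneg_left _ (by positivity)
        exact mul_le_mul_of_nonneg_right hTle hR
    _ = (2 * Real.sqrt 2 * Rmax / (1 - γ)) * Real.sqrt ε := by
        field_simp
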